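/- Let L, P > 0, d_R ≥ 1, d_F ≥ 0 integers, and let v : [0,T] → ℝ_{>0} be continuous with infimum V_L > 0. Define for an admissible discretization δ the cost C(δ;v) = Σ_{k=0}^{n−1} 4 v(t_k) h_{k+1}^{d_F} σ(h_{k+1},ρ_k) / (ρ_k^{d_R} min(ρ_k,ρ_{k+1})^{d_F+1}), with σ(h,ρ) = (ρ/4)(1+Lh)((1+Lh)/(1−Lh)+6). Then there is c > 0, depending only on L, P, d_R, d_F, V_L, such that for all admissible δ, subdividing at the index k of minimal ρ increases the cost by at least c (min_i ρ_i)^{−d_R − d_F/2}: C(ψ[δ;k];v) − C(δ;v) ≥ c (min_i ρ_i)^{−d_R−d_F/2} > 0. -/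

import Mathlib

noncomputable def sigmaFun (L h ρ : ℝ) : ℝ := (ρ/4) * (1 + L*h) * ((1 + L*h)/(1 - L*h) + 6)

/-- temporal nodes: t_k = h_1 + ... + h_k (0-based steps). -/
noncomputable def tnode (h : ℕ → ℝ) (k : ℕ) : ℝ := ∑ j ∈ Finset.range k, h j

/-- The cost estimator C(δ;v) = Σ_{k=0}^{n−1} 4 v(t_k) h_{k+1}^{d_F} σ(h_{k+1},ρ_k)
/ (ρ_k^{d_R} min(ρ_k,ρ_{k+1})^{d_F+1}); here h k stands for h_{k+1}. -/
noncomputable def costC (L : ℝ) (dR dF : ℕ) (v : ℝ → ℝ) (n : ℕ) (h ρ : ℕ → ℝ) : ℝ :=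
  ∑ k ∈ Finset.range n,
    4 * v (tnode h k) * (h k)^dF * sigmaFun L (h k) (ρ k) /
      ((ρ k)^dR * (min (ρ k) (ρ (k+1)))^(dF+1))

/-- step sizes after halving the step with 0-based index i₀. -/
noncomputable def subh (h : ℕ → ℝ) (i₀ : ℕ) : ℕ → ℝ := fun i =>
  if i < i₀ then h i else if i ≤ i₀ + 1 then h i₀ / 2 else h (i-1)

/-- mesh sizes after quartering ρ_j into two copies (j ≥ 1). -/
noncomputable def subρ (ρ : ℕ → ℝ) (j : ℕ) : ℕ → ℝ := fun k =>
  if k < j then ρ k else if k ≤ j + 1 then ρ j / 4 else ρ (k-1)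

/-- mesh sizes after quartering only ρ₀ (subdivision index j = 0). -/
noncomputable def subρ0 (ρ : ℕ → ℝ) : ℕ → ℝ := fun k => if k = 0 then ρ 0 / 4 else ρ k

/-- cost of the discretization subdivided at index j. -/
noncomputable def costCsub (L : ℝ) (dR dF : ℕ) (v : ℝ → ℝ) (n : ℕ) (h ρ : ℕ → ℝ)
    (j : ℕ) : ℝ :=
  if j = 0 then costC L dR dF v n h (subρ0 ρ)
  else costC L dR dF v (n+1) (subh h (j-1)) (subρ ρ j)

/-! ### Auxiliary lemmas -/

lemma gfac_lb {x : ℝ} (hx0 : 0 ≤ x) (hx : x ≤ 1/4) :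
    7 ≤ (1 + x) * ((1 + x)/(1 - x) + 6) := by
  have h1 : (0:ℝ) < 1 - x := by linarith
  have e : (1 + x) * ((1 + x)/(1 - x) + 6) = (1 + x) * (7 - 5*x) / (1 - x) := by
    field_simp; ring_nf
  rw [e, le_div_iff₀ h1]; nlinarith

lemma gfac_ub {x : ℝ} (hx0 : 0 ≤ x) (hx : x ≤ 1/4) :
    (1 + x) * ((1 + x)/(1 - x) + 6) ≤ 115/12 := by
  have h1 : (0:ℝ) < 1 - x := by linarith
  have e : (1 + x) * ((1 + x)/(1 - x) + 6) = (1 + x) * (7 - 5*x) / (1 - x) := by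
    field_simp; ring_nf
  rw [e, div_le_iff₀ h1]
  nlinarith [mul_nonneg (by linarith : (0:ℝ) ≤ 1 - 4*x) (by linarith : (0:ℝ) ≤ 31 - 15*x)]

lemma sigma_lb {L h ρ : ℝ} (hL : 0 ≤ L) (hh : 0 ≤ h) (hLh : L*h ≤ 1/4) (hρ : 0 ≤ ρ) :
    7/4 * ρ ≤ sigmaFun L h ρ := by
  have hg := gfac_lb (mul_nonneg hL hh) hLh
  unfold sigmaFun
  rw [mul_assoc]
  nlinarith

lemma sigma_ub {L h ρ : ℝ} (hL : 0 ≤ L) (hh : 0 ≤ h) (hLh : L*h ≤ 1/4) (hρ : 0 ≤ ρ) :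
    sigmaFun L h ρ ≤ 115/48 * ρ := by
  have hg := gfac_ub (mul_nonneg hL hh) hLh
  have hg0 := gfac_lb (mul_nonneg hL hh) hLh
  unfold sigmaFun
  rw [mul_assoc]
  nlinarith

lemma sigma_quarter (L h ρ : ℝ) : sigmaFun L h (ρ/4) = sigmaFun L h ρ / 4 := by
  unfold sigmaFun; ring

lemma pow_quarter_mul (ρ : ℝ) (dR dF : ℕ) :
    (ρ/4)^dR * (ρ/4)^(dF+1) = ρ^(dR+dF+1) / 4^(dR+dF+1) := by
  rw [← pow_add, div_pow, ← add_assoc]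

/-- quartering ρ in a nonnegative term with equal ρ's in the denominator increases it. -/
lemma quarter_le {dR dF : ℕ} {A ρ : ℝ} (hA : 0 ≤ A) (hρ : 0 < ρ) :
    A / (ρ^dR * ρ^(dF+1)) ≤ (A/4) / ((ρ/4)^dR * (ρ/4)^(dF+1)) := by
  have hD : (0:ℝ) < ρ^(dR+dF+1) := by positivity
  rw [← pow_add, pow_quarter_mul, ← add_assoc]
  have h4 : (0:ℝ) < 4^(dR+dF+1) := by positivity
  have e : (A/4) / (ρ^(dR+dF+1) / 4^(dR+dF+1)) = A * 4^(dR+dF) / ρ^(dR+dF+1) := by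
    rw [pow_succ (4:ℝ)]
    field_simp
  rw [e]
  exact (div_le_div_iff_of_pos_right hD).mpr
    (le_mul_of_one_le_right hA (one_le_pow₀ (by norm_num)))

/-- halving the step and quartering the second mesh parameter increases a term. -/
lemma half_quarter_le {L : ℝ} {dR dF : ℕ} {V hs ρa ρb : ℝ}
    (hL : 0 < L) (hV : 0 ≤ V) (hh : 0 < hs) (hLh : L*hs ≤ 1/4)
    (hρa : 0 < ρa) (hρb : 0 < ρb) :
    4*V*hs^dF*sigmaFun L hs ρa / (ρa^dR * ρb^(dF+1))
      ≤ 4*V*(hs/2)^dF*sigmaFun L (hs/2) ρa / (ρa^dR * (ρb/4)^(dF+1)) := by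
  have hLh2 : L*(hs/2) ≤ 1/4 := by nlinarith
  have hσub := sigma_ub hL.le hh.le hLh hρa.le
  have hσlb := sigma_lb hL.le (by positivity : (0:ℝ) ≤ hs/2) hLh2 hρa.le
  have hD : (0:ℝ) < ρa^dR * ρb^(dF+1) := by positivity
  have e : ρa^dR * (ρb/4)^(dF+1) = (ρa^dR * ρb^(dF+1)) / 4^(dF+1) := by
    rw [div_pow]; ring
  have e2 : 4*V*(hs/2)^dF*sigmaFun L (hs/2) ρa / (ρa^dR * (ρb/4)^(dF+1))
      = 4*V*(hs/2)^dF*sigmaFun L (hs/2) ρa * 4^(dF+1) / (ρa^dR * ρb^(dF+1)) := by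
    rw [e, div_div_eq_mul_div]
  rw [e2]
  apply (div_le_div_iff_of_pos_right hD).mpr
  have hK : (0:ℝ) ≤ 4*V*hs^dF := by positivity
  have h24 : (2:ℝ)^dF ≤ 4^dF := pow_le_pow_left₀ (by norm_num) (by norm_num) dF
  have h2p : (0:ℝ) < 2^dF := by positivity
  calc 4*V*hs^dF*sigmaFun L hs ρa ≤ 4*V*hs^dF*(115/48*ρa) :=
        mul_le_mul_of_nonneg_left hσub hK
    _ ≤ 4*V*(hs/2)^dF*(7/4*ρa) * 4^(dF+1) := by
        have hX : (0:ℝ) ≤ 4*V*hs^dF*ρa := by positivity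
        have ht : (1:ℝ) ≤ 4^dF/2^dF := (one_le_div h2p).mpr h24
        have e3 : 4*V*(hs/2)^dF*(7/4*ρa) * 4^(dF+1)
            = (4*V*hs^dF*ρa) * (7*(4^dF/2^dF)) := by
          rw [div_pow, pow_succ]; field_simp
        have e4 : 4*V*hs^dF*(115/48*ρa) = (4*V*hs^dF*ρa) * (115/48) := by ring
        rw [e3, e4]
        nlinarith [mul_le_mul_of_nonneg_left ht hX]
    _ ≤ 4*V*(hs/2)^dF*sigmaFun L (hs/2) ρa * 4^(dF+1) := by
        have h0 : (0:ℝ) ≤ 4*V*(hs/2)^dF := by positivity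
        exact mul_le_mul_of_nonneg_right (mul_le_mul_of_nonneg_left hσlb h0)
          (by positivity)

lemma main_term_lb {L P W V hs ρ : ℝ} {dR dF : ℕ} (hdR : 1 ≤ dR)
    (hL : 0 < L) (hP : 0 < P) (hW : 0 < W) (hV : W ≤ V)
    (hh : 0 < hs) (hLh : L*hs ≤ 1/4) (hcoup : ρ = 2*L*P*hs^2) :
    21/4 * W * (2*L*P) ^ (-(dF:ℝ)/2) * ρ ^ (-(dR:ℝ) - (dF:ℝ)/2)
      ≤ 4*V*(hs/2)^dF * sigmaFun L (hs/2) (ρ/4) / ((ρ/4)^dR * (ρ/4)^(dF+1)) := by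
  have hρ : 0 < ρ := by rw [hcoup]; positivity
  have hLP : (0:ℝ) < 2*L*P := by positivity
  have h8 : (0:ℝ) < 8*L*P := by positivity
  have hLh2 : L*(hs/2) ≤ 1/4 := by nlinarith
  have hσlb := sigma_lb hL.le (by positivity : (0:ℝ) ≤ hs/2) hLh2
    (by positivity : (0:ℝ) ≤ ρ/4)
  have hρp : (0:ℝ) < ρ^(dR+dF+1) := by positivity
  have hρp2 : (0:ℝ) < ρ^(dR+dF) := by positivity
  have e2 : 4*V*(hs/2)^dF * sigmaFun L (hs/2) (ρ/4) / ((ρ/4)^dR * (ρ/4)^(dF+1))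
      = 4*V*(hs/2)^dF * sigmaFun L (hs/2) (ρ/4) * 4^(dR+dF+1) / ρ^(dR+dF+1) := by
    rw [pow_quarter_mul]
    rw [div_div_eq_mul_div]
  rw [e2]
  have key : 7 * W * (hs/2)^dF * 4^(dR+dF) / ρ^(dR+dF)
      ≤ 4*V*(hs/2)^dF * sigmaFun L (hs/2) (ρ/4) * 4^(dR+dF+1) / ρ^(dR+dF+1) := by
    have e3 : 4*W*(hs/2)^dF * (7/4*(ρ/4)) * 4^(dR+dF+1) / ρ^(dR+dF+1)
        = 7 * W * (hs/2)^dF * 4^(dR+dF) / ρ^(dR+dF) := by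
      rw [pow_succ (4:ℝ), pow_succ ρ]; field_simp
    rw [← e3]
    apply (div_le_div_iff_of_pos_right hρp).mpr
    apply mul_le_mul_of_nonneg_right ?_ (by positivity : (0:ℝ) ≤ (4:ℝ)^(dR+dF+1))
    have hb : (0:ℝ) ≤ 4*V*(hs/2)^dF := by
      have : (0:ℝ) ≤ V := by linarith
      positivity
    exact mul_le_mul
      (mul_le_mul_of_nonneg_right (by linarith : 4*W ≤ 4*V)
        (by positivity : (0:ℝ) ≤ (hs/2)^dF)) hσlb (by positivity) hb
  refine le_trans ?_ key
  have hh2 : (0:ℝ) < hs/2 := by positivity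
  have hx : ((hs/2):ℝ)^(2:ℕ) = ρ/(8*L*P) := by rw [hcoup]; field_simp; ring
  have ef : ((hs/2):ℝ)^dF = ρ^((dF:ℝ)/2) / (8*L*P)^((dF:ℝ)/2) := by
    rw [← Real.rpow_natCast (hs/2) dF, ← Real.div_rpow hρ.le h8.le, ← hx,
      ← Real.rpow_natCast (hs/2) 2, ← Real.rpow_mul hh2.le]
    congr 1
    push_cast
    ring
  have eρ : (ρ:ℝ)^(dR+dF) = ρ^((dR:ℝ)+(dF:ℝ)) := by
    rw [← Real.rpow_natCast ρ (dR+dF)]; push_cast; ring_nf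
  have e4 : ((4:ℝ))^(dR+dF) = (4:ℝ)^((dR:ℝ)+(dF:ℝ)) := by
    rw [← Real.rpow_natCast (4:ℝ) (dR+dF)]; push_cast; ring_nf
  rw [ef, eρ, e4]
  have e5 : ρ^((dF:ℝ)/2)/ρ^((dR:ℝ)+(dF:ℝ)) = ρ^(-(dR:ℝ) - (dF:ℝ)/2) := by
    rw [← Real.rpow_sub hρ]
    congr 1
    ring
  have e6 : 7*W*(ρ^((dF:ℝ)/2)/(8*L*P)^((dF:ℝ)/2))*(4:ℝ)^((dR:ℝ)+(dF:ℝ))/ρ^((dR:ℝ)+(dF:ℝ))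
      = (7*W*(4:ℝ)^((dR:ℝ)+(dF:ℝ))/(8*L*P)^((dF:ℝ)/2)) * (ρ^((dF:ℝ)/2)/ρ^((dR:ℝ)+(dF:ℝ))) := by
    ring
  rw [e6, e5]
  apply mul_le_mul_of_nonneg_right ?_ (Real.rpow_pos_of_pos hρ _).le
  have eneg : (2*L*P:ℝ)^(-(dF:ℝ)/2) = 1/(2*L*P)^((dF:ℝ)/2) := by
    rw [neg_div, Real.rpow_neg hLP.le]
    rw [one_div]
  have e8 : (8*L*P:ℝ)^((dF:ℝ)/2) = (4:ℝ)^((dF:ℝ)/2) * (2*L*P)^((dF:ℝ)/2) := by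
    rw [← Real.mul_rpow (by norm_num) hLP.le]
    congr 1
    ring
  rw [eneg, e8]
  have hpos2 : (0:ℝ) < (2*L*P)^((dF:ℝ)/2) := Real.rpow_pos_of_pos hLP _
  have hpos4 : (0:ℝ) < (4:ℝ)^((dF:ℝ)/2) := Real.rpow_pos_of_pos (by norm_num) _
  have h4e : (4:ℝ)^((dF:ℝ)/2) ≤ (4:ℝ)^((dR:ℝ)+(dF:ℝ)) := by
    apply Real.rpow_le_rpow_of_exponent_le (by norm_num)
    have h1 : (1:ℝ) ≤ (dR:ℝ) := by exact_mod_cast hdR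
    have h2 : (0:ℝ) ≤ (dF:ℝ) := by positivity
    linarith
  rw [mul_one_div, div_le_div_iff₀ (by positivity) (by positivity)]
  have hW4 : (0:ℝ) ≤ 21/4*W := by linarith
  nlinarith [mul_le_mul_of_nonneg_left (mul_le_mul_of_nonneg_right h4e hpos2.le) hW4,
    mul_pos hpos4 hpos2, Real.rpow_pos_of_pos hLP ((dF:ℝ)/2)]

lemma zero_term_lb {L P W V hs ρ0 ρ1 : ℝ} {dR dF : ℕ} (hdR : 1 ≤ dR)
    (hL : 0 < L) (hP : 0 < P) (hW : 0 < W) (hV : W ≤ V)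
    (hh : 0 < hs) (hLh : L*hs ≤ 1/4) (hρ0 : 0 < ρ0) (hρ01 : ρ0 ≤ ρ1)
    (hcoup : ρ1 = 2*L*P*hs^2) :
    21/4 * W * (2*L*P)^(-(dF:ℝ)/2) * ρ0^(-(dR:ℝ) - (dF:ℝ)/2)
      ≤ 4*V*hs^dF*sigmaFun L hs (ρ0/4)/((ρ0/4)^dR * (min (ρ0/4) ρ1)^(dF+1))
        - 4*V*hs^dF*sigmaFun L hs ρ0/(ρ0^dR * (min ρ0 ρ1)^(dF+1)) := by
  have hLP : (0:ℝ) < 2*L*P := by positivity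
  have hV0 : (0:ℝ) ≤ V := by linarith
  have hσ := sigma_lb hL.le hh.le hLh hρ0.le
  have hσ0 : (0:ℝ) ≤ sigmaFun L hs ρ0 := by nlinarith
  have hmin1 : min ρ0 ρ1 = ρ0 := min_eq_left hρ01
  have hmin2 : min (ρ0/4) ρ1 = ρ0/4 := min_eq_left (by linarith)
  rw [hmin1, hmin2]
  have hD : (0:ℝ) < ρ0^dR * ρ0^(dF+1) := by positivity
  have hρp : (0:ℝ) < ρ0^(dR+dF+1) := by positivity
  have hρp2 : (0:ℝ) < ρ0^(dR+dF) := by positivity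
  have eNew : 4*V*hs^dF*sigmaFun L hs (ρ0/4)/((ρ0/4)^dR * (ρ0/4)^(dF+1))
      = (4*V*hs^dF*sigmaFun L hs ρ0/(ρ0^dR * (ρ0)^(dF+1))) * 4^(dR+dF) := by
    rw [sigma_quarter, pow_quarter_mul, ← pow_add, ← add_assoc,
      pow_succ (4:ℝ) (dR+dF), pow_succ ρ0 (dR+dF)]
    field_simp
  rw [eNew]
  have hOldlb : 7*W*hs^dF/ρ0^(dR+dF) ≤ 4*V*hs^dF*sigmaFun L hs ρ0/(ρ0^dR * ρ0^(dF+1)) := by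
    have e : 7*W*hs^dF/ρ0^(dR+dF) = 4*W*hs^dF*(7/4*ρ0)/(ρ0^dR*ρ0^(dF+1)) := by
      rw [← pow_add, ← add_assoc, pow_succ ρ0 (dR+dF)]
      field_simp
    rw [e]
    apply (div_le_div_iff_of_pos_right hD).mpr
    exact mul_le_mul
      (mul_le_mul_of_nonneg_right (by linarith : 4*W ≤ 4*V)
        (by positivity : (0:ℝ) ≤ hs^dF)) hσ (by positivity) (by positivity)
  have hOld0 : (0:ℝ) ≤ 4*V*hs^dF*sigmaFun L hs ρ0/(ρ0^dR * ρ0^(dF+1)) := by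
    have : (0:ℝ) < 7*W*hs^dF/ρ0^(dR+dF) := by positivity
    linarith
  have h4 : (4:ℝ) ≤ 4^(dR+dF) := by
    calc (4:ℝ) = 4^1 := (pow_one 4).symm
      _ ≤ 4^(dR+dF) := pow_le_pow_right₀ (by norm_num) (by omega)
  have hdiff : 3 * (7*W*hs^dF/ρ0^(dR+dF))
      ≤ (4*V*hs^dF*sigmaFun L hs ρ0/(ρ0^dR * ρ0^(dF+1))) * 4^(dR+dF)
        - 4*V*hs^dF*sigmaFun L hs ρ0/(ρ0^dR * ρ0^(dF+1)) := by
    nlinarith [mul_le_mul_of_nonneg_right hOldlb (by linarith : (0:ℝ) ≤ 4^(dR+dF) - 1)]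
  refine le_trans ?_ hdiff
  have hx : hs^(2:ℕ) = ρ1/(2*L*P) := by rw [hcoup]; field_simp
  have ef : (hs:ℝ)^dF = (ρ1/(2*L*P))^((dF:ℝ)/2) := by
    rw [← Real.rpow_natCast hs dF, ← hx, ← Real.rpow_natCast hs 2, ← Real.rpow_mul hh.le]
    congr 1
    push_cast
    ring
  have ehs : ρ0^((dF:ℝ)/2)/(2*L*P)^((dF:ℝ)/2) ≤ hs^dF := by
    rw [ef, ← Real.div_rpow hρ0.le hLP.le]
    exact Real.rpow_le_rpow (by positivity)
      ((div_le_div_iff_of_pos_right hLP).mpr hρ01) (by positivity)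
  have eρ : ρ0^(dR+dF) = ρ0^((dR:ℝ)+(dF:ℝ)) := by
    rw [← Real.rpow_natCast ρ0 (dR+dF)]; push_cast; ring_nf
  have hρr : (0:ℝ) < ρ0^((dR:ℝ)+(dF:ℝ)) := Real.rpow_pos_of_pos hρ0 _
  have hstep : 3*(7*W*(ρ0^((dF:ℝ)/2)/(2*L*P)^((dF:ℝ)/2))/ρ0^((dR:ℝ)+(dF:ℝ)))
      ≤ 3*(7*W*hs^dF/ρ0^(dR+dF)) := by
    rw [eρ]
    apply mul_le_mul_of_nonneg_left ?_ (by norm_num : (0:ℝ) ≤ 3)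
    exact (div_le_div_iff_of_pos_right hρr).mpr
      (mul_le_mul_of_nonneg_left ehs (by linarith : (0:ℝ) ≤ 7*W))
  refine le_trans ?_ hstep
  have e5 : ρ0^((dF:ℝ)/2)/ρ0^((dR:ℝ)+(dF:ℝ)) = ρ0^(-(dR:ℝ)-(dF:ℝ)/2) := by
    rw [← Real.rpow_sub hρ0]
    congr 1
    ring
  have e6 : 3*(7*W*(ρ0^((dF:ℝ)/2)/(2*L*P)^((dF:ℝ)/2))/ρ0^((dR:ℝ)+(dF:ℝ)))
      = (21*W/(2*L*P)^((dF:ℝ)/2))*(ρ0^((dF:ℝ)/2)/ρ0^((dR:ℝ)+(dF:ℝ))) := by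
    ring
  rw [e6, e5]
  apply mul_le_mul_of_nonneg_right ?_ (Real.rpow_pos_of_pos hρ0 _).le
  have eneg : (2*L*P:ℝ)^(-(dF:ℝ)/2) = 1/(2*L*P)^((dF:ℝ)/2) := by
    rw [neg_div, Real.rpow_neg hLP.le, one_div]
  rw [eneg, mul_one_div]
  have hpos2 : (0:ℝ) < (2*L*P)^((dF:ℝ)/2) := Real.rpow_pos_of_pos hLP _
  exact (div_le_div_iff_of_pos_right hpos2).mpr (by linarith)

lemma sum_split (G G' : ℕ → ℝ) (i n : ℕ) (hi : i + 1 ≤ n) :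
    (∑ m ∈ Finset.range (n+1), G' m) - (∑ m ∈ Finset.range n, G m)
      = (∑ m ∈ Finset.range i, (G' m - G m)) + (G' i - G i) + G' (i+1)
        + ∑ k ∈ Finset.Ico (i+1) n, (G' (k+1) - G k) := by
  have e1 : ∑ m ∈ Finset.range (n+1), G' m
      = (∑ m ∈ Finset.range i, G' m) + G' i + G' (i+1)
        + ∑ k ∈ Finset.Ico (i+1) n, G' (k+1) := by
    have h1 : ∑ k ∈ Finset.Ico (i+1) n, G' (k+1)
        = ∑ m ∈ Finset.Ico (i+2) (n+1), G' m := by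
      rw [Finset.sum_Ico_eq_sum_range, Finset.sum_Ico_eq_sum_range]
      rw [show n + 1 - (i+2) = n - (i+1) by omega]
      exact Finset.sum_congr rfl (fun k _ => by congr 1; omega)
    rw [h1, Finset.range_eq_Ico,
      ← Finset.sum_Ico_consecutive _ (by omega : 0 ≤ i+2) (by omega : i+2 ≤ n+1),
      show i+2 = (i+1)+1 from rfl,
      Finset.sum_Ico_succ_top (by omega : 0 ≤ i+1),
      Finset.sum_Ico_succ_top (by omega : 0 ≤ i), ← Finset.range_eq_Ico]
  have e2 : ∑ m ∈ Finset.range n, G m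
      = (∑ m ∈ Finset.range i, G m) + G i + ∑ k ∈ Finset.Ico (i+1) n, G k := by
    rw [Finset.range_eq_Ico,
      ← Finset.sum_Ico_consecutive _ (by omega : 0 ≤ i+1) (by omega : i+1 ≤ n),
      Finset.sum_Ico_succ_top (by omega : 0 ≤ i), ← Finset.range_eq_Ico]
  rw [e1, e2, Finset.sum_sub_distrib, Finset.sum_sub_distrib]
  ring

noncomputable def Fterm (L : ℝ) (dR dF : ℕ) (v : ℝ → ℝ) (h ρ : ℕ → ℝ) (k : ℕ) : ℝ :=
  4 * v (tnode h k) * (h k)^dF * sigmaFun L (h k) (ρ k) /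
    ((ρ k)^dR * (min (ρ k) (ρ (k+1)))^(dF+1))

lemma costC_eq (L : ℝ) (dR dF : ℕ) (v : ℝ → ℝ) (n : ℕ) (h ρ : ℕ → ℝ) :
    costC L dR dF v n h ρ = ∑ k ∈ Finset.range n, Fterm L dR dF v h ρ k := rfl

theorem cost_increase_at_min_rho (L P T : ℝ) (hL : 0 < L) (hP : 0 < P) (hT : 0 < T)
    (dR dF : ℕ) (hdR : 1 ≤ dR) (v : ℝ → ℝ) (V_L : ℝ) (hVL : 0 < V_L)
    (hv : ∀ t ∈ Set.Icc (0:ℝ) T, V_L ≤ v t) :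
    ∃ c > (0:ℝ), ∀ (n : ℕ) (h ρ : ℕ → ℝ), 1 ≤ n →
      (∀ j < n, 0 < h j) → (∑ j ∈ Finset.range n, h j = T) →
      (∀ j < n, h j ≤ 1/(4*L)) →
      (∀ k ≤ n, 0 < ρ k) → (∀ k ≤ n, ρ k ≤ P/(8*L)) →
      (∀ j ≤ n, ∀ k ≤ n, ∃ ℓ : ℤ, ρ j / ρ k = (4:ℝ)^ℓ) →
      (∀ j < n, ρ (j+1) = 2*L*P*(h j)^2) →
      ∀ k ≤ n, (∀ i ≤ n, ρ k ≤ ρ i) →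
        c * (ρ k) ^ (-(dR:ℝ) - (dF:ℝ)/2)
          ≤ costCsub L dR dF v n h ρ k - costC L dR dF v n h ρ := by
  refine ⟨21/4 * V_L * (2*L*P)^(-(dF:ℝ)/2), by positivity, ?_⟩
  intro n h ρ hn hhpos hsum hhle hρpos hρle _hpow hcoup j hjn hjmin
  have hLhalf : ∀ m, m < n → L * h m ≤ 1/4 := by
    intro m hm
    calc L * h m ≤ L * (1/(4*L)) := mul_le_mul_of_nonneg_left (hhle m hm) hL.le
      _ = 1/4 := by field_simp
  have hnode0 : ∀ m, m ≤ n → 0 ≤ tnode h m := by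
    intro m hm
    apply Finset.sum_nonneg
    intro x hx
    exact (hhpos x (by have := Finset.mem_range.mp hx; omega)).le
  have hnodeT : ∀ m, m ≤ n → tnode h m ≤ T := by
    intro m hm
    rw [← hsum]
    exact Finset.sum_le_sum_of_subset_of_nonneg (Finset.range_subset_range.mpr hm)
      (fun x hx _ => (hhpos x (Finset.mem_range.mp hx)).le)
  have hnodemem : ∀ m, m ≤ n → V_L ≤ v (tnode h m) := fun m hm =>
    hv _ ⟨hnode0 m hm, hnodeT m hm⟩
  rcases Nat.eq_zero_or_pos j with rfl | hj1
  · -- j = 0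
    have hρ01 : ρ 0 ≤ ρ 1 := hjmin 1 hn
    unfold costCsub
    rw [if_pos rfl]
    rw [costC_eq, costC_eq, ← Finset.sum_sub_distrib,
      Finset.sum_eq_single_of_mem 0 (Finset.mem_range.mpr (by omega)) ?_]
    · have es1 : subρ0 ρ 0 = ρ 0 / 4 := by simp [subρ0]
      have es2 : subρ0 ρ 1 = ρ 1 := by simp [subρ0]
      simp only [Fterm, es1, es2]
      exact zero_term_lb hdR hL hP hVL (hnodemem 0 (by omega)) (hhpos 0 (by omega))
        (hLhalf 0 (by omega)) (hρpos 0 (by omega)) hρ01 (hcoup 0 (by omega))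
    · intro b _ hb
      have e1 : subρ0 ρ b = ρ b := by simp [subρ0, hb]
      have e2 : subρ0 ρ (b+1) = ρ (b+1) := by simp [subρ0]
      simp only [Fterm, e1, e2, sub_self]
  · -- j ≥ 1
    obtain ⟨i, rfl⟩ : ∃ i, j = i + 1 := ⟨j-1, by omega⟩
    simp only [costCsub, if_neg (by omega : ¬ (i+1 = 0)), Nat.add_sub_cancel]
    set h' := subh h i with hh'def
    set ρ' := subρ ρ (i+1) with hρ'def
    rw [costC_eq, costC_eq,
      sum_split (Fterm L dR dF v h ρ) (Fterm L dR dF v h' ρ') i n hjn]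
    -- basic value facts
    have Eh1 : ∀ m, m < i → h' m = h m := by
      intro m hm; simp only [hh'def, subh]; rw [if_pos hm]
    have Eh2 : h' i = h i / 2 := by
      simp only [hh'def, subh]; rw [if_neg (by omega), if_pos (by omega)]
    have Eh3 : h' (i+1) = h i / 2 := by
      simp only [hh'def, subh]; rw [if_neg (by omega), if_pos (by omega)]
    have Eh4 : ∀ m, i+2 ≤ m → h' m = h (m-1) := by
      intro m hm; simp only [hh'def, subh]; rw [if_neg (by omega), if_neg (by omega)]
    have Eρ1 : ∀ m, m ≤ i → ρ' m = ρ m := by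
      intro m hm; simp only [hρ'def, subρ]; rw [if_pos (by omega)]
    have Eρ2 : ρ' (i+1) = ρ (i+1) / 4 := by
      simp only [hρ'def, subρ]; rw [if_neg (by omega), if_pos (by omega)]
    have Eρ3 : ρ' (i+2) = ρ (i+1) / 4 := by
      simp only [hρ'def, subρ]; rw [if_neg (by omega), if_pos (by omega)]
    have Eρ4 : ∀ m, i+3 ≤ m → ρ' m = ρ (m-1) := by
      intro m hm; simp only [hρ'def, subρ]; rw [if_neg (by omega), if_neg (by omega)]
    have Et1 : ∀ m, m ≤ i → tnode h' m = tnode h m := by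
      intro m hm
      exact Finset.sum_congr rfl
        (fun x hx => Eh1 x (by have := Finset.mem_range.mp hx; omega))
    have Et2 : tnode h' (i+1) = tnode h i + h i / 2 := by
      simp only [tnode]
      rw [Finset.sum_range_succ, Eh2]
      have e : (∑ x ∈ Finset.range i, h' x) = ∑ x ∈ Finset.range i, h x :=
        Finset.sum_congr rfl (fun x hx => Eh1 x (Finset.mem_range.mp hx))
      rw [e]
    have Et3' : ∀ p, tnode h' (i+2+p) = tnode h (i+1+p) := by
      intro p
      induction p with
      | zero =>
        show tnode h' (i+2) = tnode h (i+1)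
        simp only [tnode]
        rw [Finset.sum_range_succ, Finset.sum_range_succ, Finset.sum_range_succ,
          Eh2, Eh3]
        have e : (∑ x ∈ Finset.range i, h' x) = ∑ x ∈ Finset.range i, h x :=
          Finset.sum_congr rfl (fun x hx => Eh1 x (Finset.mem_range.mp hx))
        rw [e]
        ring
      | succ p ih =>
        show tnode h' ((i+2+p)+1) = tnode h ((i+1+p)+1)
        simp only [tnode] at ih ⊢
        rw [Finset.sum_range_succ, Finset.sum_range_succ, Eh4 (i+2+p) (by omega), ih,
          show (i+2+p)-1 = i+1+p by omega]
    have Et3 : ∀ m, i+2 ≤ m → tnode h' m = tnode h (m-1) := by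
      intro m hm
      have := Et3' (m - (i+2))
      rw [show i+2+(m-(i+2)) = m by omega, show i+1+(m-(i+2)) = m-1 by omega] at this
      exact this
    -- the four pieces
    have P1 : ∑ m ∈ Finset.range i,
        (Fterm L dR dF v h' ρ' m - Fterm L dR dF v h ρ m) = 0 := by
      apply Finset.sum_eq_zero
      intro m hm
      have hmi := Finset.mem_range.mp hm
      simp only [Fterm, Et1 m hmi.le, Eh1 m hmi, Eρ1 m (by omega), Eρ1 (m+1) (by omega),
        sub_self]
    have P2 : Fterm L dR dF v h ρ i ≤ Fterm L dR dF v h' ρ' i := by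
      have hm1 : ρ (i+1) ≤ ρ i := hjmin i (by omega)
      have hm2 : ρ (i+1)/4 ≤ ρ i := by
        have := hρpos (i+1) hjn; linarith
      simp only [Fterm, Et1 i le_rfl, Eh2, Eρ1 i le_rfl, Eρ2]
      rw [min_eq_right hm1, min_eq_right hm2]
      exact half_quarter_le hL (by linarith [hnodemem i (by omega)])
        (hhpos i (by omega)) (hLhalf i (by omega)) (hρpos i (by omega)) (hρpos (i+1) hjn)
    have P3 : 21/4 * V_L * (2*L*P)^(-(dF:ℝ)/2) * ρ (i+1) ^ (-(dR:ℝ) - (dF:ℝ)/2)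
        ≤ Fterm L dR dF v h' ρ' (i+1) := by
      simp only [Fterm, Eh3, Eρ2, Eρ3, Et2, min_self]
      apply main_term_lb hdR hL hP hVL ?_ (hhpos i (by omega)) (hLhalf i (by omega))
        (hcoup i (by omega))
      apply hv
      constructor
      · have := hnode0 i (by omega); have := hhpos i (by omega); linarith
      · have h1 : tnode h i + h i / 2 ≤ tnode h (i+1) := by
          have e : tnode h (i+1) = tnode h i + h i := by
            simp only [tnode]
            rw [Finset.sum_range_succ]
          have := hhpos i (by omega)
          linarith
        have := hnodeT (i+1) hjn
        linarith
    have P4 : 0 ≤ ∑ k ∈ Finset.Ico (i+1) n,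
        (Fterm L dR dF v h' ρ' (k+1) - Fterm L dR dF v h ρ k) := by
      apply Finset.sum_nonneg
      intro k hk
      obtain ⟨hk1, hk2⟩ := Finset.mem_Ico.mp hk
      rw [sub_nonneg]
      rcases eq_or_lt_of_le hk1 with rfl | hk3
      · -- k = i+1 : quartering increases the term
        have hσ0 : (0:ℝ) ≤ sigmaFun L (h (i+1)) (ρ (i+1)) := by
          have := sigma_lb hL.le (hhpos (i+1) hk2).le (hLhalf (i+1) hk2)
            (hρpos (i+1) hjn).le
          have := hρpos (i+1) hjn
          linarith
        have em : min (ρ (i+1)) (ρ (i+2)) = ρ (i+1) :=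
          min_eq_left (hjmin (i+2) (by omega))
        have em2 : min (ρ (i+1)/4) (ρ (i+2)) = ρ (i+1)/4 := by
          apply min_eq_left
          have := hjmin (i+2) (by omega)
          have := hρpos (i+1) hjn
          linarith
        have eT : tnode h' (i+1+1) = tnode h (i+1) := by
          rw [Et3 (i+2) (by omega)]
          congr 1
        simp only [Fterm, eT, Eh4 (i+1+1) (by omega), Eρ3, em,
          show (i+1+1)-1 = i+1 from rfl]
        rw [show ρ' (i+1+1+1) = ρ (i+2) from by
            rw [Eρ4 (i+3) (by omega)]
            congr 1]
        rw [em2, sigma_quarter]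
        have eA : 4 * v (tnode h (i+1)) * h (i+1) ^ dF *
            (sigmaFun L (h (i+1)) (ρ (i+1)) / 4)
            = (4 * v (tnode h (i+1)) * h (i+1) ^ dF *
              sigmaFun L (h (i+1)) (ρ (i+1))) / 4 := by ring
        rw [eA]
        apply quarter_le ?_ (hρpos (i+1) hjn)
        have hv1 : 0 ≤ v (tnode h (i+1)) := by linarith [hnodemem (i+1) hjn]
        have hhF : (0:ℝ) ≤ (h (i+1))^dF := pow_nonneg (hhpos (i+1) hk2).le dF
        exact mul_nonneg (mul_nonneg (by linarith : (0:ℝ) ≤ 4 * v (tnode h (i+1))) hhF) hσ0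
      · -- k ≥ i+2 : terms coincide
        apply le_of_eq
        have e1 : h' (k+1) = h k := by rw [Eh4 (k+1) (by omega)]; congr 1
        have e2 : ρ' (k+1) = ρ k := by rw [Eρ4 (k+1) (by omega)]; congr 1
        have e3 : ρ' (k+1+1) = ρ (k+1) := by rw [Eρ4 (k+2) (by omega)]; congr 1
        have e4 : tnode h' (k+1) = tnode h k := by rw [Et3 (k+1) (by omega)]; congr 1
        simp only [Fterm, e1, e2, e3, e4]
    linarith [P1, P2, P3, P4]
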